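/- The function ψ̃(r) = (1-β-r)·(⌊ψ(r)⌋ + (ψ(r) - ⌊ψ(r)⌋)^α) satisfies ψ̃(r) > r + β for all r ∈ (0, 1-β), and ψ̃(r) → ∞ as r → (1-β)⁻. -/

import Mathlib

open Real Filter Set Topology

/-- Segment monotonicity: `u ↦ (m + u^α)/(m+u)^α` is strictly monotone on `[0,1]` when `m ≥ 1`. -/
lemma seg_mono (α m : ℝ) (hα0 : 0 < α) (hα1 : α < 1) (hm : 1 ≤ m) :
    StrictMonoOn (fun u : ℝ => (m + u ^ α) / (m + u) ^ α) (Icc 0 1) := by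
  have hm0 : (0:ℝ) < m := by linarith
  have hnum : ∀ u : ℝ, u ∈ Icc (0:ℝ) 1 → 0 < m + u ^ α := fun u hu => by
    have : 0 ≤ u ^ α := Real.rpow_nonneg hu.1 α
    linarith
  have hden : ∀ u : ℝ, u ∈ Icc (0:ℝ) 1 → 0 < m + u := fun u hu => by linarith [hu.1]
  -- work with the logarithm
  set L : ℝ → ℝ := fun u => Real.log (m + u ^ α) - α * Real.log (m + u) with hL
  have hbridge : ∀ u : ℝ, u ∈ Icc (0:ℝ) 1 →
      (m + u ^ α) / (m + u) ^ α = Real.exp (L u) := by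
    intro u hu
    rw [hL]
    simp only
    rw [Real.exp_sub, Real.exp_log (hnum u hu), Real.rpow_def_of_pos (hden u hu), mul_comm]
  have hLmono : StrictMonoOn L (Icc 0 1) := by
    apply strictMonoOn_of_deriv_pos (convex_Icc 0 1)
    · apply ContinuousOn.sub
      · apply ContinuousOn.log
        · exact (continuous_const.add (Real.continuous_rpow_const hα0.le)).continuousOn
        · exact fun u hu => (hnum u hu).ne'
      · apply ContinuousOn.mul continuousOn_const
        apply ContinuousOn.log
        · exact (continuous_const.add continuous_id).continuousOn
        · exact fun u hu => (hden u hu).ne'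
    · intro u hu
      rw [interior_Icc] at hu
      obtain ⟨hu0, hu1⟩ := hu
      have humem : u ∈ Icc (0:ℝ) 1 := ⟨hu0.le, hu1.le⟩
      have h1 : HasDerivAt (fun u : ℝ => m + u ^ α) (α * u ^ (α - 1)) u :=
        (Real.hasDerivAt_rpow_const (Or.inl hu0.ne')).const_add m
      have h3 : HasDerivAt (fun u : ℝ => Real.log (m + u ^ α))
          (α * u ^ (α - 1) / (m + u ^ α)) u := h1.log (hnum u humem).ne'
      have h4 : HasDerivAt (fun u : ℝ => m + u) 1 u := (hasDerivAt_id u).const_add m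
      have h5 : HasDerivAt (fun u : ℝ => α * Real.log (m + u)) (α * (1 / (m + u))) u :=
        (h4.log (hden u humem).ne').const_mul α
      have hD : HasDerivAt L (α * u ^ (α - 1) / (m + u ^ α) - α * (1 / (m + u))) u :=
        h3.sub h5
      rw [hD.deriv]
      -- positivity of the derivative
      have hup : (1:ℝ) < u ^ (α - 1) := by
        rw [Real.one_lt_rpow_iff_of_pos hu0]
        right; exact ⟨hu1, by linarith⟩
      have huα : u ^ (α - 1) * u = u ^ α := by
        rw [← Real.rpow_add_one hu0.ne' (α - 1), sub_add_cancel]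
      rw [sub_pos, mul_one_div, div_lt_div_iff₀ (hden u humem) (hnum u humem)]
      have h10 : m < m * u ^ (α - 1) := by nlinarith
      have h11 : u ^ (α - 1) * (m + u) = m * u ^ (α - 1) + u ^ α := by
        rw [mul_add, huα]; ring
      have h12 : α * (m + u ^ α) < α * (u ^ (α - 1) * (m + u)) := by
        apply mul_lt_mul_of_pos_left _ hα0
        rw [h11]; linarith
      calc α * (m + u ^ α) < α * (u ^ (α - 1) * (m + u)) := h12
        _ = α * u ^ (α - 1) * (m + u) := by ring
  intro a ha b hb hab
  show (m + a ^ α) / (m + a) ^ α < (m + b ^ α) / (m + b) ^ α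
  rw [hbridge a ha, hbridge b hb]
  exact Real.exp_lt_exp.2 (hLmono ha hb hab)

/-- Key inequality. -/
lemma key_ineq (α θ m u : ℝ) (hα0 : 0 < α) (hα1 : α < 1) (hθ0 : 0 < θ) (hθ1 : θ < 1)
    (hm : m = 1 ∨ 2 ≤ m) (hu0 : 0 ≤ u) (hu1 : u < 1) (hgt : 1 + θ < m + u) :
    (1 + θ ^ α) * (m + u) ^ α < (1 + θ) ^ α * (m + u ^ α) := by
  have hm1 : (1:ℝ) ≤ m := by rcases hm with h | h <;> linarith
  have hden1 : (0:ℝ) < 1 + θ := by linarith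
  have hdenm : (0:ℝ) < m + u := by linarith
  have hd1 : (0:ℝ) < (1 + θ) ^ α := Real.rpow_pos_of_pos hden1 α
  have hdm : (0:ℝ) < (m + u) ^ α := Real.rpow_pos_of_pos hdenm α
  have main : (1 + θ ^ α) / (1 + θ) ^ α < (m + u ^ α) / (m + u) ^ α := by
    rcases hm with rfl | h2
    · -- m = 1, so θ < u
      have hθu : θ < u := by linarith
      exact seg_mono α 1 hα0 hα1 le_rfl ⟨hθ0.le, hθ1.le⟩ ⟨hu0, hu1.le⟩ hθu
    · -- m ≥ 2
      have step1 : (1 + θ ^ α) / (1 + θ) ^ α < (1 + (1:ℝ) ^ α) / ((1:ℝ) + 1) ^ α :=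
        seg_mono α 1 hα0 hα1 le_rfl ⟨hθ0.le, hθ1.le⟩ ⟨zero_le_one, le_rfl⟩ hθ1
      have e1 : (1 + (1:ℝ) ^ α) / ((1:ℝ) + 1) ^ α = (2:ℝ) ^ (1 - α) := by
        rw [Real.one_rpow, Real.rpow_sub (by norm_num : (0:ℝ) < 2), Real.rpow_one]
        norm_num
      have step2 : (2:ℝ) ^ (1 - α) ≤ m ^ (1 - α) :=
        Real.rpow_le_rpow (by norm_num) h2 (by linarith)
      have hm0 : (0:ℝ) < m := by linarith
      have e2 : m ^ (1 - α) = (m + (0:ℝ) ^ α) / (m + 0) ^ α := by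
        rw [Real.zero_rpow hα0.ne', add_zero,
          Real.rpow_sub hm0, Real.rpow_one]
      have step3 : (m + (0:ℝ) ^ α) / (m + 0) ^ α ≤ (m + u ^ α) / (m + u) ^ α := by
        rcases eq_or_lt_of_le hu0 with rfl | hu0'
        · exact le_refl _
        · exact (seg_mono α m hα0 hα1 hm1 ⟨le_rfl, zero_le_one⟩ ⟨hu0, hu1.le⟩ hu0').le
      calc (1 + θ ^ α) / (1 + θ) ^ α < (2:ℝ) ^ (1 - α) := by rw [← e1]; exact step1
        _ ≤ m ^ (1 - α) := step2
        _ ≤ (m + u ^ α) / (m + u) ^ α := by rw [e2]; exact step3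
  rw [div_lt_div_iff₀ hd1 hdm] at main
  linarith [main]

/-- The function `ψ̃(r) = (1-β-r)(⌊ψ(r)⌋ + (ψ(r) - ⌊ψ(r)⌋)^α)` satisfies
`ψ̃(r) > r + β` on `(0, 1-β)` and tends to infinity as `r → (1-β)⁻`. -/
theorem stmt2 (α β : ℝ) (hα0 : 0 < α) (hα1 : α < 1) (hβ0 : 0 < β) (hβ1 : β < 1 / 2)
    (ψ ψt : ℝ → ℝ)
    (hψ : ∀ r, ψ r = ((1 - β) ^ (1 / α) + β ^ (1 / α)) / (1 - β - r) ^ (1 / α) - 1)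
    (hψt : ∀ r, ψt r = (1 - β - r) * ((⌊ψ r⌋ : ℝ) + (ψ r - (⌊ψ r⌋ : ℝ)) ^ α)) :
    (∀ r ∈ Set.Ioo (0 : ℝ) (1 - β), r + β < ψt r) ∧
    Tendsto ψt (nhdsWithin (1 - β) (Set.Iio (1 - β))) atTop := by
  have hβ' : (0:ℝ) < 1 - β := by linarith
  set C : ℝ := (1 - β) ^ (1 / α) + β ^ (1 / α) with hC_def
  have hβα : (0:ℝ) < β ^ (1 / α) := Real.rpow_pos_of_pos hβ0 _
  have hβα' : (0:ℝ) < (1 - β) ^ (1 / α) := Real.rpow_pos_of_pos hβ' _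
  have hC : 0 < C := by positivity
  set θ : ℝ := (β / (1 - β)) ^ (1 / α) with hθ_def
  have hθ0 : 0 < θ := Real.rpow_pos_of_pos (by positivity) _
  have hθ1 : θ < 1 := by
    apply Real.rpow_lt_one (by positivity) _ (by positivity)
    rw [div_lt_one hβ']; linarith
  have hθα : θ ^ α = β / (1 - β) := by
    rw [hθ_def, ← Real.rpow_mul (by positivity), one_div, inv_mul_cancel₀ hα0.ne',
      Real.rpow_one]
  have hθeq : θ = β ^ (1/α) / (1 - β) ^ (1/α) := by
    rw [hθ_def, Real.div_rpow hβ0.le hβ'.le]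
  have hCeq : C = (1 - β) ^ (1/α) * (1 + θ) := by
    rw [hθeq]; field_simp [hC_def]; exact hC_def
  have hCα : C ^ α = (1 - β) * (1 + θ) ^ α := by
    rw [hCeq, Real.mul_rpow hβα'.le (by linarith : (0:ℝ) ≤ 1 + θ),
      ← Real.rpow_mul hβ'.le, one_div, inv_mul_cancel₀ hα0.ne', Real.rpow_one]
  have hone : (1 - β) * (1 + θ ^ α) = 1 := by
    rw [hθα]; field_simp; ring
  constructor
  · -- the strict inequality
    intro r hr
    obtain ⟨hr0, hr1⟩ := hr
    have hs : 0 < 1 - β - r := by linarith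
    set s : ℝ := 1 - β - r with hs_def
    have hsα : 0 < s ^ (1/α) := Real.rpow_pos_of_pos hs _
    set x : ℝ := C / s ^ (1/α) with hx_def
    have hx0 : 0 < x := by positivity
    have hψr : ψ r = x - 1 := by rw [hψ r]
    have hsx : s ^ (1/α) < (1 - β) ^ (1/α) :=
      Real.rpow_lt_rpow hs.le (by linarith) (by positivity)
    have hxgt : 1 + θ < x := by
      have h1 : C / (1 - β) ^ (1/α) < C / s ^ (1/α) :=
        div_lt_div_of_pos_left hC hsα hsx
      have h2 : C / (1 - β) ^ (1/α) = 1 + θ := by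
        rw [hCeq]; field_simp
      rw [hx_def, ← h2]; exact h1
    have hψpos : 0 ≤ ψ r := by rw [hψr]; linarith
    set N : ℤ := ⌊ψ r⌋ with hN_def
    have hN0 : 0 ≤ N := Int.floor_nonneg.2 hψpos
    set u : ℝ := ψ r - (N : ℝ) with hu_def
    have hu0 : 0 ≤ u := by
      rw [hu_def, hN_def]; exact sub_nonneg.2 (Int.floor_le _)
    have hu1 : u < 1 := by
      rw [hu_def, hN_def]
      have := Int.lt_floor_add_one (ψ r); linarith
    set m : ℝ := (N : ℝ) + 1 with hm_def
    have hmu : m + u = x := by rw [hm_def, hu_def, hψr]; ring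
    have hm : m = 1 ∨ 2 ≤ m := by
      rcases eq_or_lt_of_le hN0 with h | h
      · left; rw [hm_def, ← h]; norm_num
      · right; rw [hm_def]
        have : (1:ℤ) ≤ N := h
        have : (1:ℝ) ≤ (N:ℝ) := by exact_mod_cast this
        linarith
    have hkey := key_ineq α θ m u hα0 hα1 hθ0 hθ1 hm hu0 hu1 (by rw [hmu]; exact hxgt)
    rw [hmu] at hkey
    -- s * x^α = C^α
    have hsxα : s * x ^ α = C ^ α := by
      have h1 : (s ^ (1/α)) ^ α = s := by
        rw [← Real.rpow_mul hs.le, one_div, inv_mul_cancel₀ hα0.ne', Real.rpow_one]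
      rw [hx_def, Real.div_rpow hC.le hsα.le, h1]
      field_simp
    have hxα : 0 < x ^ α := Real.rpow_pos_of_pos hx0 α
    have h7 : x ^ α < C ^ α * (m + u ^ α) := by
      calc x ^ α = (1 - β) * ((1 + θ ^ α) * x ^ α) := by
            rw [← mul_assoc, hone, one_mul]
        _ < (1 - β) * ((1 + θ) ^ α * (m + u ^ α)) := by
            exact mul_lt_mul_of_pos_left hkey hβ'
        _ = C ^ α * (m + u ^ α) := by rw [hCα]; ring
    have h8 : 1 < s * (m + u ^ α) := by
      have h9 : 1 * x ^ α < (s * (m + u ^ α)) * x ^ α := by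
        rw [one_mul]
        calc x ^ α < C ^ α * (m + u ^ α) := h7
          _ = (s * (m + u ^ α)) * x ^ α := by rw [← hsxα]; ring
      exact lt_of_mul_lt_mul_right (by linarith) hxα.le
    have hψtr : ψt r = s * ((N : ℝ) + u ^ α) := by
      rw [hψt r, ← hs_def, ← hN_def, ← hu_def]
    rw [hψtr]
    have : s * ((N:ℝ) + u ^ α) = s * (m + u ^ α) - s := by rw [hm_def]; ring
    rw [this]
    have : r + β = 1 - s := by rw [hs_def]; ring
    linarith
  · -- tendsto atTop
    have hbound : ∀ r ∈ Iio (1 - β),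
        C * (1 - β - r) ^ (1 - 1/α) - 3 * (1 - β - r) ≤ ψt r := by
      intro r hr
      have hs : 0 < 1 - β - r := by simp only [mem_Iio] at hr; linarith
      set s : ℝ := 1 - β - r with hs_def
      have hsα : 0 < s ^ (1/α) := Real.rpow_pos_of_pos hs _
      have hψr : ψ r = C / s ^ (1/α) - 1 := hψ r
      have hfl : ψ r - 2 ≤ (⌊ψ r⌋ : ℝ) + (ψ r - (⌊ψ r⌋ : ℝ)) ^ α := by
        have h1 : ψ r - 1 < (⌊ψ r⌋ : ℝ) := Int.sub_one_lt_floor (ψ r)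
        have h2 : 0 ≤ (ψ r - (⌊ψ r⌋ : ℝ)) ^ α :=
          Real.rpow_nonneg (sub_nonneg.2 (Int.floor_le _)) α
        linarith
      have h3 : s * (ψ r - 2) ≤ ψt r := by
        rw [hψt r, ← hs_def]
        exact mul_le_mul_of_nonneg_left hfl hs.le
      have h4 : s * (ψ r - 2) = C * s ^ (1 - 1/α) - 3 * s := by
        rw [hψr, Real.rpow_sub hs, Real.rpow_one, div_eq_mul_inv, div_eq_mul_inv]
        ring
      rw [← h4]
      exact h3
    have h1 : Tendsto (fun r : ℝ => 1 - β - r) (𝓝[<] (1 - β)) (𝓝[>] (0:ℝ)) := by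
      apply tendsto_nhdsWithin_of_tendsto_nhds_of_eventually_within
      · have : Tendsto (fun r : ℝ => 1 - β - r) (𝓝 (1 - β)) (𝓝 (1 - β - (1 - β))) :=
          (continuous_const.sub continuous_id).tendsto _
        simpa using this.mono_left nhdsWithin_le_nhds
      · filter_upwards [eventually_mem_nhdsWithin] with r hr
        simp only [mem_Iio] at hr
        simp only [mem_Ioi]
        linarith
    have h2 : Tendsto (fun s : ℝ => C * s ^ (1 - 1/α) - 3 * s) (𝓝[>] (0:ℝ)) atTop := by
      have hneg : 0 < 1/α - 1 := by
        rw [one_div]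
        have : 1 < α⁻¹ := (one_lt_inv₀ hα0).2 hα1
        linarith
      have ha : Tendsto (fun s : ℝ => (s⁻¹) ^ (1/α - 1)) (𝓝[>] (0:ℝ)) atTop :=
        (tendsto_rpow_atTop hneg).comp tendsto_inv_nhdsGT_zero
      have hb : Tendsto (fun s : ℝ => s ^ (1 - 1/α)) (𝓝[>] (0:ℝ)) atTop := by
        apply ha.congr'
        filter_upwards [eventually_mem_nhdsWithin] with s hs
        simp only [mem_Ioi] at hs
        rw [← Real.rpow_neg_one s, ← Real.rpow_mul hs.le]
        ring_nf
      have hc : Tendsto (fun s : ℝ => C * s ^ (1 - 1/α)) (𝓝[>] (0:ℝ)) atTop :=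
        hb.const_mul_atTop hC
      have hd : Tendsto (fun s : ℝ => -(3 * s)) (𝓝[>] (0:ℝ)) (𝓝 (-(3 * 0))) := by
        exact ((continuous_const.mul continuous_id).neg.tendsto _).mono_left
          nhdsWithin_le_nhds
      have := hc.atTop_add (by simpa using hd)
      simpa [sub_eq_add_neg] using this
    have htend : Tendsto (fun r : ℝ => C * (1 - β - r) ^ (1 - 1/α) - 3 * (1 - β - r))
        (𝓝[<] (1 - β)) atTop := h2.comp h1
    apply tendsto_atTop_mono' _ _ htend
    filter_upwards [eventually_mem_nhdsWithin] with r hr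
    exact hbound r hr
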